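/- Define paracomplex-valued functions on ℝ² by ψ₁(u,v) = (e^v/2)(sinh u + τ cosh u), ψ₂(u,v) = 0, ψ₃(u,v) = (e^v/2)(cosh u + τ sinh u). Then: (1) they satisfy the Lorentzian Heisenberg Weierstrass system ∂ψ₁/∂z̄ − Re(conj(ψ₃)ψ₂) = 0 and ∂ψ₂/∂z̄ + Re(conj(ψ₃)ψ₁) = 0 on all of ℝ²; (2) ψ₁² + ψ₂² − ψ₃² = 0; (3) the quantity ψ₁conj(ψ₁) + ψ₂conj(ψ₂) − ψ₃conj(ψ₃) equals −e^{2v}/2 < 0 (identifying a real paracomplex number (x,0) with x). -/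

import Mathlib

/-- Paracomplex multiplication on 𝕃 = ℝ × ℝ. -/
def Lmul (z w : ℝ × ℝ) : ℝ × ℝ := (z.1 * w.1 + z.2 * w.2, z.1 * w.2 + z.2 * w.1)

/-- Paracomplex conjugation: a + τb ↦ a − τb. -/
def Lconj (z : ℝ × ℝ) : ℝ × ℝ := (z.1, -z.2)

/-- The real part of a paracomplex number, regarded as the paracomplex number (a, 0). -/
def LRe (z : ℝ × ℝ) : ℝ × ℝ := (z.1, 0)

/-- The paracomplex operator ∂/∂z̄: for ψ = (a, b), ∂ψ/∂z̄ = (1/2)(a_u − b_v, b_u − a_v). -/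
noncomputable def dzbarL (ψ : ℝ × ℝ → ℝ × ℝ) (p : ℝ × ℝ) : ℝ × ℝ :=
  ((1 / 2) * ((fderiv ℝ ψ p (1, 0)).1 - (fderiv ℝ ψ p (0, 1)).2),
   (1 / 2) * ((fderiv ℝ ψ p (1, 0)).2 - (fderiv ℝ ψ p (0, 1)).1))

/-- The Weierstrass data ψ₁ = (e^v/2)(sinh u + τ cosh u), ψ₂ = 0,
ψ₃ = (e^v/2)(cosh u + τ sinh u) satisfies the Lorentzian Heisenberg system,
the conformality condition ψ₁² + ψ₂² − ψ₃² = 0, and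
ψ₁conj(ψ₁) + ψ₂conj(ψ₂) − ψ₃conj(ψ₃) = −e^{2v}/2 < 0. -/
theorem heisenberg_vertical_plane_data
    (ψ₁ ψ₂ ψ₃ : ℝ × ℝ → ℝ × ℝ)
    (hψ₁ : ∀ p : ℝ × ℝ, ψ₁ p =
      (Real.exp p.2 / 2 * Real.sinh p.1, Real.exp p.2 / 2 * Real.cosh p.1))
    (hψ₂ : ∀ p : ℝ × ℝ, ψ₂ p = 0)
    (hψ₃ : ∀ p : ℝ × ℝ, ψ₃ p =
      (Real.exp p.2 / 2 * Real.cosh p.1, Real.exp p.2 / 2 * Real.sinh p.1)) :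
    (∀ p : ℝ × ℝ, dzbarL ψ₁ p - LRe (Lmul (Lconj (ψ₃ p)) (ψ₂ p)) = 0 ∧
      dzbarL ψ₂ p + LRe (Lmul (Lconj (ψ₃ p)) (ψ₁ p)) = 0) ∧
    (∀ p : ℝ × ℝ,
      Lmul (ψ₁ p) (ψ₁ p) + Lmul (ψ₂ p) (ψ₂ p) - Lmul (ψ₃ p) (ψ₃ p) = 0) ∧
    (∀ p : ℝ × ℝ,
      Lmul (ψ₁ p) (Lconj (ψ₁ p)) + Lmul (ψ₂ p) (Lconj (ψ₂ p)) -
        Lmul (ψ₃ p) (Lconj (ψ₃ p)) = (-(Real.exp (2 * p.2)) / 2, 0) ∧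
      -(Real.exp (2 * p.2)) / 2 < 0) := by

  have key : ∀ p : ℝ × ℝ, ∃ L : (ℝ × ℝ) →L[ℝ] (ℝ × ℝ),
      HasFDerivAt
        (fun p : ℝ × ℝ => (Real.exp p.2 / 2 * Real.sinh p.1, Real.exp p.2 / 2 * Real.cosh p.1))
        L p ∧
      (L (1, 0)).1 = Real.exp p.2 / 2 * Real.cosh p.1 ∧
      (L (0, 1)).2 = Real.exp p.2 / 2 * Real.cosh p.1 ∧
      (L (1, 0)).2 = Real.exp p.2 / 2 * Real.sinh p.1 ∧
      (L (0, 1)).1 = Real.exp p.2 / 2 * Real.sinh p.1 := by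
    intro p
    have hu : HasFDerivAt (fun p : ℝ × ℝ => p.1) (ContinuousLinearMap.fst ℝ ℝ ℝ) p :=
      hasFDerivAt_fst
    have hv : HasFDerivAt (fun p : ℝ × ℝ => p.2) (ContinuousLinearMap.snd ℝ ℝ ℝ) p :=
      hasFDerivAt_snd
    have hfun : (fun p : ℝ × ℝ =>
        (Real.exp p.2 / 2 * Real.sinh p.1, Real.exp p.2 / 2 * Real.cosh p.1)) =
        fun p : ℝ × ℝ =>
        ((1 / 2 : ℝ) * (Real.exp p.2 * Real.sinh p.1),
         (1 / 2 : ℝ) * (Real.exp p.2 * Real.cosh p.1)) := by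
      funext q
      simp only [Prod.mk.injEq]
      constructor <;> ring
    rw [hfun]
    refine ⟨_, HasFDerivAt.prodMk ((hv.exp.mul hu.sinh).const_mul (1 / 2))
      ((hv.exp.mul hu.cosh).const_mul (1 / 2)), ?_, ?_, ?_, ?_⟩ <;>
    · simp [ContinuousLinearMap.prod_apply]
      ring
  have hψ₁' : ψ₁ = fun p : ℝ × ℝ =>
      (Real.exp p.2 / 2 * Real.sinh p.1, Real.exp p.2 / 2 * Real.cosh p.1) := funext hψ₁
  have hψ₂' : ψ₂ = fun _ : ℝ × ℝ => (0 : ℝ × ℝ) := funext hψ₂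
  have hd1 : ∀ p : ℝ × ℝ, dzbarL ψ₁ p = 0 := by
    intro p
    rw [hψ₁']
    unfold dzbarL
    obtain ⟨L, hL, h1, h2, h3, h4⟩ := key p
    rw [hL.fderiv, h1, h2, h3, h4]
    simp
  have hd2 : ∀ p : ℝ × ℝ, dzbarL ψ₂ p = 0 := by
    intro p
    rw [hψ₂']
    unfold dzbarL
    rw [fderiv_const_apply]
    simp
  refine ⟨fun p => ?_, fun p => ?_, fun p => ⟨?_, ?_⟩⟩
  · constructor
    · rw [hd1 p, hψ₂ p]
      simp [Lmul, LRe, Lconj]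
    · rw [hd2 p, hψ₁ p, hψ₃ p]
      simp only [Lmul, LRe, Lconj, Prod.ext_iff]
      constructor <;> (simp; try ring)
  · rw [hψ₁ p, hψ₂ p, hψ₃ p]
    simp only [Lmul, Prod.ext_iff]
    constructor <;> (simp; nlinarith [Real.cosh_sq p.1])
  · rw [hψ₁ p, hψ₂ p, hψ₃ p]
    simp only [Lmul, Lconj, Prod.ext_iff]
    have h := Real.cosh_sq p.1
    have he : Real.exp (2 * p.2) = Real.exp p.2 * Real.exp p.2 := by
      rw [two_mul, Real.exp_add]
    constructor <;> (simp; nlinarith [Real.cosh_sq p.1, he])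
  · have := Real.exp_pos (2 * p.2); linarith
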